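/- In a uniformly ∞-convex complete geodesic metric space, the nearest point projection onto any nonempty closed convex set is at most single-valued. -/

import Mathlib

open Set Metric Filter

variable {M : Type*}

def IsGeodesic [MetricSpace M] (γ : ℝ → M) : Prop :=
  ∀ s ∈ Set.Icc (0:ℝ) 1, ∀ t ∈ Set.Icc (0:ℝ) 1,
    dist (γ s) (γ t) = |s - t| * dist (γ 0) (γ 1)

def GeodesicSpace (M : Type*) [MetricSpace M] : Prop :=
  ∀ x y : M, ∃ γ : ℝ → M, IsGeodesic γ ∧ γ 0 = x ∧ γ 1 = y

def Perp [MetricSpace M] (γ η : ℝ → M) : Prop :=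
  ∀ t ∈ Set.Icc (0:ℝ) 1, ∀ s ∈ Set.Icc (0:ℝ) 1,
    dist (γ 0) (γ t) ≤ dist (η s) (γ t)

def SO (M : Type*) [MetricSpace M] : Prop :=
  ∀ γ η : ℝ → M, IsGeodesic γ → IsGeodesic η → γ 0 = η 0 → Perp γ η → Perp η γ

def WeaklyConvex [MetricSpace M] (C : Set M) : Prop :=
  ∀ x ∈ C, ∀ y ∈ C, ∃ γ : ℝ → M, IsGeodesic γ ∧ γ 0 = x ∧ γ 1 = y ∧
    ∀ t ∈ Set.Icc (0:ℝ) 1, γ t ∈ C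

def GeoConvex [MetricSpace M] (C : Set M) : Prop :=
  ∀ γ : ℝ → M, IsGeodesic γ → γ 0 ∈ C → γ 1 ∈ C → ∀ t ∈ Set.Icc (0:ℝ) 1, γ t ∈ C

def NearestPt [MetricSpace M] (C : Set M) (x y : M) : Prop :=
  y ∈ C ∧ dist x y = Metric.infDist x C

def NE (M : Type*) [MetricSpace M] : Prop :=
  ∀ C : Set M, IsClosed C → WeaklyConvex C → ∀ x y xC yC : M,
    NearestPt C x xC → NearestPt C y yC → dist xC yC ≤ dist x y

def BusemannConvex (M : Type*) [MetricSpace M] : Prop :=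
  ∀ γ η : ℝ → M, IsGeodesic γ → IsGeodesic η →
    ConvexOn ℝ (Set.Icc (0:ℝ) 1) (fun t => dist (γ t) (η t))
def UnifInfConvexWith (ρ : ℝ → ℝ) (M : Type*) [MetricSpace M] : Prop :=
  (∀ ε > (0:ℝ), ρ ε > 0) ∧
  ∀ ε > (0:ℝ), ∀ x y z m : M,
    dist y z > ε * max (dist x y) (dist x z) →
    dist y m = dist y z / 2 → dist z m = dist y z / 2 →
    dist x m ≤ (1 - ρ ε) * max (dist x y) (dist x z)

theorem stmt9 [MetricSpace M] [CompleteSpace M] (hgeo : GeodesicSpace M)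
    (ρ : ℝ → ℝ) (hρ : UnifInfConvexWith ρ M)
    (C : Set M) (hCne : C.Nonempty) (hCc : IsClosed C) (hCconv : GeoConvex C)
    (x y z : M) (hy : NearestPt C x y) (hz : NearestPt C x z) : y = z := by
  by_contra hne
  obtain ⟨hyC, hyd⟩ := hy
  obtain ⟨hzC, hzd⟩ := hz
  set d := Metric.infDist x C with hd
  obtain ⟨γ, hγ, hγ0, hγ1⟩ := hgeo y z
  have half : (1/2 : ℝ) ∈ Set.Icc (0:ℝ) 1 := by norm_num
  set m := γ (1/2 : ℝ) with hm
  have hmC : m ∈ C := hCconv γ hγ (hγ0 ▸ hyC) (hγ1 ▸ hzC) _ half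
  have hdyz : dist y z > 0 := dist_pos.mpr hne
  have hym : dist y m = dist y z / 2 := by
    have h := hγ 0 (by norm_num) (1/2) half
    rw [hm, ← hγ0, h, hγ0, hγ1, show |(0:ℝ) - 1/2| = 1/2 by norm_num]; ring
  have hzm : dist z m = dist y z / 2 := by
    have h := hγ 1 (by norm_num) (1/2) half
    rw [hm, ← hγ1, h, hγ0, hγ1, show |(1:ℝ) - 1/2| = 1/2 by norm_num]; ring
  have hdle : d ≤ dist x m := Metric.infDist_le_dist_of_mem hmC
  have hd0 : 0 ≤ d := Metric.infDist_nonneg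
  rcases eq_or_lt_of_le hd0 with h0 | hdpos
  · -- d = 0, so x = y = z
    have : dist x y = 0 := by rw [hyd, ← h0]
    have hxy : x = y := by rwa [dist_eq_zero] at this
    have : dist x z = 0 := by rw [hzd, ← h0]
    have hxz : x = z := by rwa [dist_eq_zero] at this
    exact hne (hxy ▸ hxz)
  · set ε := dist y z / (2 * d) with hε
    have hεpos : ε > 0 := div_pos hdyz (by linarith)
    have hmax : max (dist x y) (dist x z) = d := by
      rw [hyd, hzd]; simp
    have hcond : dist y z > ε * max (dist x y) (dist x z) := by
      rw [hmax, hε]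
      have hd' : d ≠ 0 := ne_of_gt hdpos
      have : dist y z / (2 * d) * d = dist y z / 2 := by field_simp
      rw [this]; linarith
    have key := hρ.2 ε hεpos x y z m hcond hym hzm
    rw [hmax] at key
    have hρε : ρ ε > 0 := hρ.1 ε hεpos
    nlinarith
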